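/- Let φ = (φ₁, φ_q) be a real symbol, α ∈ [0,1), c ∈ ℝ, and let g = (g₁, g_q) ∈ H²_α be outer with φ₁·|g₁|² = c·log(q^{-1/2}) almost everywhere on [0,2π) and φ_q·|g_q|² = c·log(q^{1/2}) almost everywhere on [0,2π). Then T_φ^α g = 0. -/

import Mathlib

noncomputable section

open MeasureTheory Complex
open scoped ComplexConjugate

namespace AnnulusToeplitz

/-- Lebesgue measure `dt` on `[0, 2π)`. -/
abbrev μI : Measure ℝ := volume.restrict (Set.Ico 0 (2 * Real.pi))

instance : IsFiniteMeasure μI := by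
  constructor
  rw [Measure.restrict_apply_univ]
  rw [Real.volume_Ico]
  exact ENNReal.ofReal_lt_top

/-- `L²([0,2π), dt; ℂ)`. -/
abbrev L2I : Type := Lp ℂ 2 μI

/-- The Hilbert space `L² ⊕ L²`; the first summand carries boundary values on the outer
circle `B₁` (`z = e^{it}`), the second on the inner circle `B_q` (`z = q e^{it}`). -/
abbrev L2A : Type := WithLp 2 (L2I × L2I)

/-- Build an element of `L² ⊕ L²` from its two coordinates. -/
def pairA (f g : L2I) : L2A := (WithLp.equiv 2 (L2I × L2I)).symm (f, g)

/-- Outer-boundary coordinate. -/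
def fst' (x : L2A) : L2I := ((WithLp.equiv 2 (L2I × L2I)) x).1

/-- Inner-boundary coordinate. -/
def snd' (x : L2A) : L2I := ((WithLp.equiv 2 (L2I × L2I)) x).2

/-- A bounded (a.e.) measurable function times an `L²` function is in `L²`. -/
lemma memLp_bdd_mul {φ : ℝ → ℂ} (hφ : AEStronglyMeasurable φ μI) (C : ℝ)
    (hC : ∀ᵐ t ∂μI, ‖φ t‖ ≤ C) (g : L2I) :
    MemLp (fun t => φ t * g t) 2 μI := by
  refine MemLp.of_le_mul (c := C) (Lp.memLp g) (hφ.mul (Lp.aestronglyMeasurable g)) ?_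
  filter_upwards [hC] with t ht
  rw [norm_mul]
  exact mul_le_mul_of_nonneg_right ht (norm_nonneg _)

lemma memLp_exp (r : ℝ) :
    MemLp (fun t : ℝ => Complex.exp (((r * t : ℝ) : ℂ) * Complex.I)) 2 μI := by
  refine MemLp.of_bound (Continuous.aestronglyMeasurable (by fun_prop)) 1
    (Filter.Eventually.of_forall fun t => ?_)
  simp [Complex.norm_exp, Complex.mul_re, Complex.mul_im]

/-- The modulus-automorphic exponential `e_r(t) = e^{irt}` as an element of `L²`. -/
def eA (r : ℝ) : L2I := (memLp_exp r).toLp _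

/-- The spanning vectors `(e_{n+α}, q^{n+α} e_{n+α})` of the Sarason Hardy space `H²_α`. -/
def basisA (q α : ℝ) (n : ℤ) : L2A :=
  pairA (eA ((n : ℝ) + α)) (((q ^ ((n : ℝ) + α) : ℝ) : ℂ) • eA ((n : ℝ) + α))

/-- The Sarason Hardy space `H²_α`, the closed span of `{(e_{n+α}, q^{n+α} e_{n+α}) : n ∈ ℤ}`. -/
def H2a (q α : ℝ) : Submodule ℂ L2A :=
  (Submodule.span ℂ (Set.range (basisA q α))).topologicalClosure

instance (q α : ℝ) : CompleteSpace (H2a q α) :=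
  (Submodule.isClosed_topologicalClosure _).completeSpace_coe

/-- Coordinatewise multiplication of `g ∈ L² ⊕ L²` by a real symbol `φ = (φ₁, φ_q)`. -/
def symbolMul (φ1 φq : ℝ → ℝ) (h1 : Measurable φ1) (hq : Measurable φq)
    {C : ℝ} (hb1 : ∀ t, |φ1 t| ≤ C) (hbq : ∀ t, |φq t| ≤ C) (g : L2A) : L2A :=
  pairA
    ((memLp_bdd_mul ((Complex.measurable_ofReal.comp h1).aestronglyMeasurable) C
      (Filter.Eventually.of_forall fun t => by simpa using hb1 t) (fst' g)).toLp _)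
    ((memLp_bdd_mul ((Complex.measurable_ofReal.comp hq).aestronglyMeasurable) C
      (Filter.Eventually.of_forall fun t => by simpa using hbq t) (snd' g)).toLp _)

/-- The Toeplitz operator `T_φ^α : H²_α → H²_α`, `g ↦ P_α (φ · g)`. -/
def toeplitzA (q : ℝ) (φ1 φq : ℝ → ℝ) (h1 : Measurable φ1) (hq : Measurable φq)
    {C : ℝ} (hb1 : ∀ t, |φ1 t| ≤ C) (hbq : ∀ t, |φq t| ≤ C) (α : ℝ)
    (g : H2a q α) : H2a q α :=
  (H2a q α).orthogonalProjectionOnto (symbolMul φ1 φq h1 hq hb1 hbq (g : L2A))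

/-- The action of the Laurent monomial `z^k` on `L² ⊕ L²`:
`(g₁, g_q) ↦ (e^{ikt} g₁, q^k e^{ikt} g_q)`. -/
def mulMono (q : ℝ) (k : ℤ) (g : L2A) : L2A :=
  pairA
    ((memLp_bdd_mul (Continuous.aestronglyMeasurable (by fun_prop)) 1
      (Filter.Eventually.of_forall fun t => by
        simp [Complex.norm_exp, Complex.mul_re, Complex.mul_im]) (fst' g)).toLp
      (fun t : ℝ => Complex.exp ((((k : ℝ) * t : ℝ) : ℂ) * Complex.I) * (fst' g) t))
    ((memLp_bdd_mul (Continuous.aestronglyMeasurable (by fun_prop)) |q ^ k|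
      (Filter.Eventually.of_forall fun t => by
        rw [show |q ^ k| = |q| ^ k by
          rw [abs_zpow]]
        simp [Complex.norm_exp, Complex.mul_re, Complex.mul_im,
          abs_mul]) (snd' g)).toLp
      (fun t : ℝ => ((q ^ k : ℝ) : ℂ) *
        Complex.exp ((((k : ℝ) * t : ℝ) : ℂ) * Complex.I) * (snd' g) t))

/-- `g` is outer in `H²_α`: the Laurent-polynomial multiples of `g` are dense in `H²_α`. -/
def OuterA (q α : ℝ) (g : L2A) : Prop :=
  (Submodule.span ℂ (Set.range fun k : ℤ => mulMono q k g)).topologicalClosure = H2a q α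

/-- `lam` is an eigenvalue of the real symbol `φ = (φ₁, φ_q)` relative to `A(𝔸)`. -/
def IsEigenvalueRelAnn (q : ℝ) (φ1 φq : ℝ → ℝ) (h1 : Measurable φ1) (hq : Measurable φq)
    {C : ℝ} (hb1 : ∀ t, |φ1 t| ≤ C) (hbq : ∀ t, |φq t| ≤ C) (lam : ℝ) : Prop :=
  ∃ α : ℝ, 0 ≤ α ∧ α < 1 ∧ ∃ g : H2a q α, g ≠ 0 ∧
    toeplitzA q φ1 φq h1 hq hb1 hbq α g = (lam : ℂ) • g

end AnnulusToeplitz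

namespace AnnulusToeplitz


lemma conj_exp_real_mul_I (r : ℝ) :
    (starRingEnd ℂ) (Complex.exp ((r : ℂ) * Complex.I)) =
      Complex.exp (((-r : ℝ) : ℂ) * Complex.I) := by
  rw [← Complex.exp_conj, map_mul, Complex.conj_ofReal, Complex.conj_I]
  congr 1
  push_cast
  ring

lemma integral_exp_I (k : ℤ) (hk : k ≠ 0) :
    ∫ t : ℝ, Complex.exp (((-((k : ℝ) * t) : ℝ) : ℂ) * Complex.I) ∂μI = 0 := by
  have h2π : (0 : ℝ) ≤ 2 * Real.pi := by positivity
  have hc : (-(k : ℂ)) * Complex.I ≠ 0 :=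
    mul_ne_zero (neg_ne_zero.2 (Int.cast_ne_zero.2 hk)) Complex.I_ne_zero
  have hfun : ∀ t : ℝ, Complex.exp (((-((k : ℝ) * t) : ℝ) : ℂ) * Complex.I)
      = Complex.exp ((-(k : ℂ) * Complex.I) * (t : ℂ)) := by
    intro t; congr 1; push_cast; ring
  simp_rw [hfun]
  rw [show (∫ t : ℝ, Complex.exp ((-(k : ℂ) * Complex.I) * (t : ℂ)) ∂μI)
      = ∫ t in Set.Ico 0 (2 * Real.pi), Complex.exp ((-(k : ℂ) * Complex.I) * (t : ℂ)) from rfl,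
    MeasureTheory.integral_Ico_eq_integral_Ioo, ← MeasureTheory.integral_Ioc_eq_integral_Ioo,
    ← intervalIntegral.integral_of_le h2π, integral_exp_mul_complex hc]
  have h1 : (-(k : ℂ) * Complex.I) * ((2 * Real.pi : ℝ) : ℂ)
      = ((-k : ℤ) : ℂ) * (2 * Real.pi * Complex.I) := by push_cast; ring
  rw [h1, Complex.exp_int_mul_two_pi_mul_I]
  simp

lemma inner_pairA (a b x y : L2I) :
    (inner ℂ (pairA a b) (pairA x y) : ℂ) = inner ℂ a x + inner ℂ b y := by
  rw [WithLp.prod_inner_apply]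
  rfl

lemma conj_mul_self (z : ℂ) : (starRingEnd ℂ) z * z = ((‖z‖ ^ 2 : ℝ) : ℂ) := by
  rw [mul_comm, Complex.mul_conj, ← Complex.sq_norm]

lemma inner_toLp {f s : ℝ → ℂ} (hf : MemLp f 2 μI) (hs : MemLp s 2 μI) :
    (inner ℂ (hf.toLp f) (hs.toLp s) : ℂ) = ∫ t, (starRingEnd ℂ) (f t) * s t ∂μI := by
  rw [MeasureTheory.L2.inner_def]
  refine MeasureTheory.integral_congr_ae ?_
  filter_upwards [hf.coeFn_toLp, hs.coeFn_toLp] with t ha hb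
  rw [ha, hb, RCLike.inner_apply']

/-- if `g ∈ H²_α` is outer and `φ₁|g₁|² = c log(q^{-1/2})`,
`φ_q|g_q|² = c log(q^{1/2})` a.e. for some real `c`, then `T_φ^α g = 0`. -/
theorem annulus_kernel_of_outer (q : ℝ) (hq0 : 0 < q) (hq1 : q < 1)
    (φ1 φq : ℝ → ℝ) (h1 : Measurable φ1) (hq' : Measurable φq)
    {C : ℝ} (hb1 : ∀ t, |φ1 t| ≤ C) (hbq : ∀ t, |φq t| ≤ C)
    (α : ℝ) (hα0 : 0 ≤ α) (hα1 : α < 1) (c : ℝ)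
    (g : H2a q α) (hout : OuterA q α (g : L2A))
    (heq1 : ∀ᵐ t ∂μI, φ1 t * ‖(fst' (g : L2A)) t‖ ^ 2 = c * Real.log (q ^ (-(1 : ℝ) / 2)))
    (heqq : ∀ᵐ t ∂μI, φq t * ‖(snd' (g : L2A)) t‖ ^ 2 = c * Real.log (q ^ ((1 : ℝ) / 2))) :
    toeplitzA q φ1 φq h1 hq' hb1 hbq α g = 0 := by
  classical
  set G : L2A := (g : L2A) with hG
  set K : ℝ := c * Real.log (q ^ (-(1 : ℝ) / 2)) with hK
  have hKq : c * Real.log (q ^ ((1 : ℝ) / 2)) = -K := by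
    rw [hK, Real.log_rpow hq0, Real.log_rpow hq0]; ring
  have key : ∀ k : ℤ,
      (inner ℂ (mulMono q k G) (symbolMul φ1 φq h1 hq' hb1 hbq G) : ℂ) = 0 := by
    intro k
    rw [mulMono, symbolMul, inner_pairA]
    set Ik : ℂ := ∫ t : ℝ, Complex.exp (((-((k : ℝ) * t) : ℝ) : ℂ) * Complex.I) ∂μI with hIk
    rw [inner_toLp, inner_toLp]
    have hae1 : (fun t : ℝ => (starRingEnd ℂ)
          (Complex.exp ((((k : ℝ) * t : ℝ) : ℂ) * Complex.I) * (fst' G) t) *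
          ((Complex.ofReal ∘ φ1) t * (fst' G) t)) =ᵐ[μI]
        (fun t : ℝ => (K : ℂ) * Complex.exp (((-((k : ℝ) * t) : ℝ) : ℂ) * Complex.I)) := by
      filter_upwards [heq1] with t ht
      rw [map_mul, conj_exp_real_mul_I]
      have hKc : ((φ1 t : ℝ) : ℂ) * ((‖(fst' G) t‖ ^ 2 : ℝ) : ℂ) = (K : ℂ) := by
        rw [← Complex.ofReal_mul, ht]
      calc Complex.exp (((-((k : ℝ) * t) : ℝ) : ℂ) * Complex.I) *
            (starRingEnd ℂ) ((fst' G) t) * ((Complex.ofReal ∘ φ1) t * (fst' G) t)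
          = ((φ1 t : ℝ) : ℂ) * ((starRingEnd ℂ) ((fst' G) t) * (fst' G) t) *
            Complex.exp (((-((k : ℝ) * t) : ℝ) : ℂ) * Complex.I) := by
            simp only [Function.comp_apply]; ring
        _ = (K : ℂ) * Complex.exp (((-((k : ℝ) * t) : ℝ) : ℂ) * Complex.I) := by
            rw [conj_mul_self, hKc]
    have hae2 : (fun t : ℝ => (starRingEnd ℂ)
          (((q ^ k : ℝ) : ℂ) * Complex.exp ((((k : ℝ) * t : ℝ) : ℂ) * Complex.I) *
            (snd' G) t) *
          ((Complex.ofReal ∘ φq) t * (snd' G) t)) =ᵐ[μI]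
        (fun t : ℝ => (((q ^ k : ℝ) : ℂ) * (-K : ℝ)) *
          Complex.exp (((-((k : ℝ) * t) : ℝ) : ℂ) * Complex.I)) := by
      filter_upwards [heqq] with t ht
      rw [map_mul, map_mul, conj_exp_real_mul_I, Complex.conj_ofReal]
      have hKc : ((φq t : ℝ) : ℂ) * ((‖(snd' G) t‖ ^ 2 : ℝ) : ℂ) = ((-K : ℝ) : ℂ) := by
        rw [← Complex.ofReal_mul, ht, hKq]
      calc ((q ^ k : ℝ) : ℂ) * Complex.exp (((-((k : ℝ) * t) : ℝ) : ℂ) * Complex.I) *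
            (starRingEnd ℂ) ((snd' G) t) * ((Complex.ofReal ∘ φq) t * (snd' G) t)
          = ((q ^ k : ℝ) : ℂ) * (((φq t : ℝ) : ℂ) *
              ((starRingEnd ℂ) ((snd' G) t) * (snd' G) t)) *
            Complex.exp (((-((k : ℝ) * t) : ℝ) : ℂ) * Complex.I) := by
            simp only [Function.comp_apply]; ring
        _ = ((q ^ k : ℝ) : ℂ) * ((-K : ℝ) : ℂ) *
            Complex.exp (((-((k : ℝ) * t) : ℝ) : ℂ) * Complex.I) := by
            rw [conj_mul_self, hKc]
        _ = _ := by ring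
    rw [MeasureTheory.integral_congr_ae hae1, MeasureTheory.integral_congr_ae hae2,
      MeasureTheory.integral_const_mul, MeasureTheory.integral_const_mul, ← hIk]
    rcases eq_or_ne k 0 with rfl | hk
    · push_cast
      ring_nf
      simp
    · rw [hIk, integral_exp_I k hk]
      ring
  have hmem : symbolMul φ1 φq h1 hq' hb1 hbq G ∈ (H2a q α)ᗮ := by
    rw [← hout, ← Submodule.orthogonal_orthogonal_eq_closure,
      Submodule.triorthogonal_eq_orthogonal, Submodule.mem_orthogonal]
    intro u hu
    induction hu using Submodule.span_induction with
    | mem x hx => obtain ⟨k, rfl⟩ := hx; exact key k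
    | zero => exact inner_zero_left _
    | add x y _ _ hx hy => rw [inner_add_left, hx, hy, add_zero]
    | smul a x _ hx => rw [inner_smul_left, hx, mul_zero]
  exact Submodule.orthogonalProjectionOnto_apply_of_mem_orthogonal hmem


end AnnulusToeplitz
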